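/- For every integer k ≥ 1 and every positive integer n, S_{2k+1}(n) = (S_1(n))^2 · Σ_{r=1}^{k} c_{k,r} · (S_1(n))^(r-1), as an identity of rational numbers, where c_{k,r} = Σ_{m=r}^{k} (2^(r+1) / ((2m+2)! · (m+1))) · R(k+1, m+1) · Ps_{m+1}^(r+1). -/

import Mathlib

/-- `S k n = 1^k + 2^k + ⋯ + n^k`, the sum of the `k`-th powers of the first `n`
positive integers. -/
def S (k n : ℕ) : ℕ := ∑ i ∈ Finset.Icc 1 n, i ^ k

/-- `R k m = ∑_{j=0}^m (-1)^j C(2m, j) (m-j)^{2k}`, the sequence A304330. -/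
def R (k m : ℕ) : ℤ :=
  ∑ j ∈ Finset.range (m + 1),
    (-1 : ℤ) ^ j * ((2 * m).choose j : ℤ) * (((m - j) ^ (2 * k) : ℕ) : ℤ)

/-- The (signed) Legendre-Stirling number of the first kind `Ps_m^{(r)}`: the
coefficient of `x^r` in `∏_{j=0}^{m-1} (x − j(j+1))`. -/
noncomputable def Ps (m r : ℕ) : ℤ :=
  (∏ j ∈ Finset.range m, (Polynomial.X - Polynomial.C ((j * (j + 1) : ℕ) : ℤ))).coeff r

/-- The Faulhaber coefficients `c_{k,r}`. -/
noncomputable def c (k r : ℕ) : ℚ :=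
  ∑ m ∈ Finset.Icc r k,
    (2 ^ (r + 1) / ((Nat.factorial (2 * m + 2) : ℚ) * (m + 1 : ℚ))) *
      (R (k + 1) (m + 1) : ℚ) * (Ps (m + 1) (r + 1) : ℚ)

open Finset Polynomial

/-- Abel-summation style finite difference step for alternating binomial sums. -/
lemma alt_diff (N : ℕ) (f : ℕ → ℤ) :
    ∑ j ∈ range (N + 2), (-1 : ℤ) ^ j * ((N + 1).choose j) * f j
      = ∑ j ∈ range (N + 1), (-1 : ℤ) ^ j * (N.choose j) * (f j - f (j + 1)) := by
  have h1 : ∑ j ∈ range (N + 2), (-1 : ℤ) ^ j * ((N + 1).choose j) * f j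
      = ∑ j ∈ range (N + 1), (-1 : ℤ) ^ (j+1) * ((N + 1).choose (j+1)) * f (j+1) + f 0 := by
    rw [Finset.sum_range_succ' (fun j => (-1 : ℤ) ^ j * ((N + 1).choose j) * f j) (N+1)]
    simp
  have h2 : ∑ j ∈ range (N + 2), (-1 : ℤ) ^ j * (N.choose j) * f j
      = ∑ j ∈ range (N + 1), (-1 : ℤ) ^ j * (N.choose j) * f j := by
    rw [Finset.sum_range_succ]
    simp [Nat.choose_eq_zero_of_lt (Nat.lt_succ_self N)]
  have h3 : ∑ j ∈ range (N + 2), (-1 : ℤ) ^ j * (N.choose j) * f j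
      = ∑ j ∈ range (N + 1), (-1 : ℤ) ^ (j+1) * (N.choose (j+1)) * f (j+1) + f 0 := by
    rw [Finset.sum_range_succ' (fun j => (-1 : ℤ) ^ j * (N.choose j) * f j) (N+1)]
    simp
  calc ∑ j ∈ range (N + 2), (-1 : ℤ) ^ j * ((N + 1).choose j) * f j
      = ∑ j ∈ range (N + 1), (-1 : ℤ) ^ (j+1) * ((N + 1).choose (j+1)) * f (j+1) + f 0 := h1
    _ = ∑ j ∈ range (N + 1), ((-1 : ℤ) ^ (j+1) * (N.choose j) * f (j+1)
          + (-1 : ℤ) ^ (j+1) * (N.choose (j+1)) * f (j+1)) + f 0 := by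
        congr 1; apply Finset.sum_congr rfl; intro j _
        rw [Nat.choose_succ_succ]; push_cast; ring
    _ = ∑ j ∈ range (N + 1), (-1 : ℤ) ^ (j+1) * (N.choose j) * f (j+1)
          + (∑ j ∈ range (N + 1), (-1 : ℤ) ^ (j+1) * (N.choose (j+1)) * f (j+1) + f 0) := by
        rw [Finset.sum_add_distrib]; ring
    _ = ∑ j ∈ range (N + 1), (-1 : ℤ) ^ (j+1) * (N.choose j) * f (j+1)
          + ∑ j ∈ range (N + 1), (-1 : ℤ) ^ j * (N.choose j) * f j := by rw [← h3, h2]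
    _ = ∑ j ∈ range (N + 1), (-1 : ℤ) ^ j * (N.choose j) * (f j - f (j + 1)) := by
        rw [← Finset.sum_add_distrib]; apply Finset.sum_congr rfl; intro j _; ring

lemma alt_vanish : ∀ d N : ℕ, ∀ c : ℤ, d < N →
    ∑ j ∈ range (N + 1), (-1 : ℤ) ^ j * (N.choose j) * (c - j) ^ d = 0 := by
  intro d
  induction d using Nat.strong_induction_on with
  | _ d ih =>
    intro N c hdN
    obtain ⟨N', rfl⟩ : ∃ N', N = N' + 1 := ⟨N - 1, by omega⟩
    rw [alt_diff N' (fun j => (c - j) ^ d)]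
    have key : ∀ j : ℕ, (c - j) ^ d - (c - (j+1 : ℕ)) ^ d
        = ∑ e ∈ range d, (d.choose e : ℤ) * (c - 1 - j) ^ e := by
      intro j
      have h : (c - j : ℤ) = (c - 1 - j) + 1 := by push_cast; ring
      have h2 : (c - (j+1 : ℕ) : ℤ) = c - 1 - j := by push_cast; ring
      rw [h, h2, add_pow]
      rw [Finset.sum_range_succ]
      simp [mul_comm]
    calc ∑ j ∈ range (N' + 1), (-1:ℤ) ^ j * (N'.choose j) * ((c - j) ^ d - (c - (j+1:ℕ)) ^ d)
        = ∑ j ∈ range (N' + 1), ∑ e ∈ range d,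
            (d.choose e : ℤ) * ((-1:ℤ) ^ j * (N'.choose j) * (c - 1 - j) ^ e) := by
          apply Finset.sum_congr rfl; intro j _
          rw [key j, Finset.mul_sum]
          apply Finset.sum_congr rfl; intro e _; ring
      _ = ∑ e ∈ range d, (d.choose e : ℤ) *
            ∑ j ∈ range (N' + 1), (-1:ℤ) ^ j * (N'.choose j) * (c - 1 - j) ^ e := by
          rw [Finset.sum_comm]
          apply Finset.sum_congr rfl; intro e _
          rw [Finset.mul_sum]
      _ = 0 := by
          apply Finset.sum_eq_zero; intro e he
          have hed := mem_range.mp he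
          rw [ih e (mem_range.mp he) N' (c - 1) (by omega), mul_zero]

def Rfull (k m : ℕ) : ℤ :=
  ∑ j ∈ range (2 * m + 1), (-1 : ℤ) ^ j * ((2 * m).choose j) * ((m : ℤ) - j) ^ (2 * k)

lemma Rfull_vanish {k m : ℕ} (h : k < m) : Rfull k m = 0 :=
  alt_vanish (2 * k) (2 * m) m (by omega)

lemma Rfull_eq (k m : ℕ) (hk : 1 ≤ k) : Rfull k m = 2 * R k m := by
  set f : ℕ → ℤ := fun j => (-1 : ℤ) ^ j * ((2 * m).choose j) * ((m : ℤ) - j) ^ (2 * k) with hf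
  have hsym : ∀ j, j ≤ 2 * m → f (2 * m - j) = f j := by
    intro j hj
    simp only [hf]
    have h1 : (2*m).choose (2*m - j) = (2*m).choose j := Nat.choose_symm hj
    have h2 : ((m : ℤ) - (2*m - j : ℕ)) = -((m : ℤ) - j) := by push_cast [hj]; ring
    have h6 : (Even (2 * m - j)) ↔ Even j := by
      rw [Nat.even_sub hj]; simp
    have h3 : (-1 : ℤ) ^ (2*m - j) = (-1) ^ j := by
      rcases Nat.even_or_odd j with hp | hp
      · rw [Even.neg_one_pow hp, Even.neg_one_pow (h6.mpr hp)]
      · rw [Odd.neg_one_pow hp, Odd.neg_one_pow (by rw [← Nat.not_even_iff_odd, h6, Nat.not_even_iff_odd]; exact hp)]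
    rw [h1, h2, h3, (even_two_mul k).neg_pow]
  have hfm : f m = 0 := by
    simp only [hf]
    have : ((m : ℤ) - m) = 0 := by ring
    rw [this, zero_pow (by omega), mul_zero]
  have hsplit : Rfull k m = ∑ j ∈ range (m+1), f j + ∑ j ∈ range m, f (m + 1 + j) := by
    rw [Rfull, show 2*m+1 = (m+1) + m by ring, Finset.sum_range_add]
  have hrefl : ∑ j ∈ range m, f (m + 1 + j) = ∑ j ∈ range m, f j := by
    rw [← Finset.sum_range_reflect (fun j => f (m + 1 + j)) m]
    apply Finset.sum_congr rfl
    intro j hj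
    have hjm : j < m := mem_range.mp hj
    show f (m + 1 + (m - 1 - j)) = f j
    rw [show m + 1 + (m - 1 - j) = 2 * m - j by omega, hsym j (by omega)]
  have hcast : R k m = ∑ j ∈ range (m+1), f j := by
    rw [R]; apply Finset.sum_congr rfl
    intro j hj
    have hjm : j ≤ m := by simpa [Nat.lt_succ_iff] using mem_range.mp hj
    simp only [hf]
    have : (((m - j : ℕ) : ℤ)) = (m : ℤ) - j := by push_cast [hjm]; ring
    rw [← this]; push_cast; ring
  rw [hsplit, hrefl, hcast, Finset.sum_range_succ, hfm, add_zero]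
  ring

lemma choose_fact1 (m j : ℕ) (hj : j ≤ 2*m) :
    (2*m+2).choose (j+1) * (j+1) * (2*m+1-j) = (2*m+2)*(2*m+1)*((2*m).choose j) := by
  have h1 : (2*m+2).choose (j+1) * (j+1) = (2*m+2) * ((2*m+1).choose j) := by
    have := Nat.add_one_mul_choose_eq (2*m+1) j
    simp only [Nat.succ_eq_add_one, show 2*m+1+1 = 2*m+2 by omega] at this
    omega
  have h2 : (2*m+1).choose j * (2*m+1-j) = (2*m+1) * ((2*m).choose j) := by
    have hs1 : (2*m+1).choose j = (2*m+1).choose (2*m+1-j) := (Nat.choose_symm (by omega)).symm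
    have hs3 : (2*m).choose (2*m-j) = (2*m).choose j := Nat.choose_symm hj
    have hs2 := Nat.add_one_mul_choose_eq (2*m) (2*m-j)
    rw [show 2*m-j+1 = 2*m+1-j by omega, hs3] at hs2
    rw [hs1, hs2]
  calc (2*m+2).choose (j+1) * (j+1) * (2*m+1-j) = (2*m+2) * ((2*m+1).choose j * (2*m+1-j)) := by
        rw [h1]; ring
    _ = (2*m+2)*(2*m+1)*((2*m).choose j) := by rw [h2]; ring

lemma Rfull_rec (K m : ℕ) :
    Rfull (K+1) (m+1) = ((m:ℤ)+1)^2 * Rfull K (m+1) + (2*m+2)*(2*m+1) * Rfull K m := by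
  have key : Rfull (K+1) (m+1) - ((m:ℤ)+1)^2 * Rfull K (m+1)
      = ∑ j ∈ range (2*(m+1)+1), (-1 : ℤ) ^ j * ((2*(m+1)).choose j) *
          ((((m:ℤ)+1) - j) ^ 2 - ((m:ℤ)+1)^2) * (((m:ℤ)+1) - j) ^ (2*K) := by
    rw [Rfull, Rfull, Finset.mul_sum, ← Finset.sum_sub_distrib]
    apply Finset.sum_congr rfl; intro j _
    push_cast
    ring
  have step : ∀ j ∈ range (2*(m+1)+1), (-1 : ℤ) ^ j * ((2*(m+1)).choose j) *
          ((((m:ℤ)+1) - j) ^ 2 - ((m:ℤ)+1)^2) * (((m:ℤ)+1) - j) ^ (2*K)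
        = -((-1 : ℤ) ^ j * (((2*(m+1)).choose j * j * (2*m+2-j) : ℕ) : ℤ) * (((m:ℤ)+1) - j) ^ (2*K)) := by
    intro j hj
    have hj' : j ≤ 2*m+2 := by have := mem_range.mp hj; omega
    have : ((((m:ℤ)+1) - j) ^ 2 - ((m:ℤ)+1)^2) = -((j : ℤ) * ((2*m+2 : ℤ) - j)) := by ring
    rw [this]
    have hc : (((2*(m+1)).choose j * j * (2*m+2-j) : ℕ) : ℤ)
        = ((2*(m+1)).choose j : ℤ) * j * ((2*m+2 : ℤ) - j) := by push_cast [hj']; ring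
    rw [hc]; ring
  rw [← sub_eq_iff_eq_add']
  rw [key, Finset.sum_congr rfl step, Finset.sum_neg_distrib]
  -- now reduce the sum over range (2m+3) to shifted sum over range (2m+1)
  have hshift : ∑ j ∈ range (2*(m+1)+1), (-1 : ℤ) ^ j * (((2*(m+1)).choose j * j * (2*m+2-j) : ℕ) : ℤ) * (((m:ℤ)+1) - j) ^ (2*K)
      = ∑ j ∈ range (2*m+1), (-1 : ℤ) ^ (j+1) * (((2*(m+1)).choose (j+1) * (j+1) * (2*m+1-j) : ℕ) : ℤ) * (((m:ℤ)) - j) ^ (2*K) := by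
    rw [show 2*(m+1)+1 = (2*m+2)+1 by ring, Finset.sum_range_succ,
      Finset.sum_range_succ' _ (2*m+1)]
    simp only [Nat.mul_zero, Nat.zero_mul, mul_zero, Nat.cast_zero, zero_mul, mul_zero]
    rw [show (2*m+2) - (2*m+2) = 0 by omega]
    simp only [Nat.mul_zero, Nat.cast_zero, mul_zero, zero_mul, add_zero]
    apply Finset.sum_congr rfl; intro j hj
    have : ((m:ℤ)+1) - (j+1 : ℕ) = (m:ℤ) - j := by push_cast; ring
    rw [this, show 2*m+2-(j+1) = 2*m+1-j by omega]
  rw [hshift]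
  have : ∀ j ∈ range (2*m+1), (-1 : ℤ) ^ (j+1) * (((2*(m+1)).choose (j+1) * (j+1) * (2*m+1-j) : ℕ) : ℤ) * (((m:ℤ)) - j) ^ (2*K)
      = -((2*m+2)*(2*m+1) * ((-1 : ℤ) ^ j * ((2*m).choose j) * ((m:ℤ) - j) ^ (2*K))) := by
    intro j hj
    have hj' : j ≤ 2*m := by have := mem_range.mp hj; omega
    rw [show (2*(m+1)) = 2*m+2 by ring, choose_fact1 m j hj']
    push_cast
    ring
  rw [Finset.sum_congr rfl this, Finset.sum_neg_distrib, neg_neg, ← Finset.mul_sum, Rfull]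

noncomputable def t (K m : ℕ) : ℚ := (Rfull K m : ℚ) / (Nat.factorial (2*m))

noncomputable def Q (m : ℕ) : Polynomial ℚ :=
  ∏ j ∈ range m, (Polynomial.X - Polynomial.C ((j:ℚ)^2))

lemma Rfull_one (K : ℕ) : Rfull (K+1) 1 = 2 := by
  have h : ((1:ℤ) - 2) ^ (2*(K+1)) = 1 := by
    rw [show ((1:ℤ)-2) = -1 by norm_num]
    exact Even.neg_one_pow (even_two_mul _)
  rw [Rfull, show 2*1+1 = 3 by norm_num,
    Finset.sum_range_succ, Finset.sum_range_succ, Finset.sum_range_succ]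
  norm_num [h]

lemma t_one (K : ℕ) : t (K+1) 1 = 1 := by
  rw [t, Rfull_one]
  norm_num [Nat.factorial]

lemma t_vanish {K m : ℕ} (h : K < m) : t K m = 0 := by
  rw [t, Rfull_vanish h]; norm_num

lemma t_rec (K m : ℕ) : t (K+1) (m+1) = ((m:ℚ)+1)^2 * t K (m+1) + t K m := by
  rw [t, t, t, Rfull_rec]
  have hfac : ((2*(m+1)).factorial : ℚ) = (2*m+2) * (2*m+1) * (2*m).factorial := by
    rw [show 2*(m+1) = (2*m+1)+1 by ring, Nat.factorial_succ, Nat.factorial_succ]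
    push_cast
    ring
  have h1 : ((2*(m+1)).factorial : ℚ) ≠ 0 := by positivity
  have h2 : ((2*m).factorial : ℚ) ≠ 0 := by positivity
  rw [hfac]
  field_simp [hfac]
  push_cast
  ring

lemma XQ (m : ℕ) : (X : Polynomial ℚ) * Q (m+1) = Q (m+2) + C (((m:ℚ)+1)^2) * Q (m+1) := by
  have : Q (m+2) = Q (m+1) * (X - C (((m+1:ℕ):ℚ)^2)) := Finset.prod_range_succ _ (m+1)
  rw [this]
  push_cast
  ring

lemma polyB : ∀ K : ℕ, (Polynomial.X : Polynomial ℚ)^(K+1)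
    = ∑ m ∈ range (K+1), Polynomial.C (t (K+1) (m+1)) * Q (m+1) := by
  intro K
  induction K with
  | zero =>
    simp [t_one, Q]
  | succ K ih =>
    have hstep : (X : Polynomial ℚ)^(K+2) = X * X^(K+1) := by ring
    rw [hstep, ih, Finset.mul_sum]
    have h1 : ∀ m ∈ range (K+1), (X : Polynomial ℚ) * (C (t (K+1) (m+1)) * Q (m+1))
        = C (t (K+1) (m+1)) * Q (m+2) + C (((m:ℚ)+1)^2 * t (K+1) (m+1)) * Q (m+1) := by
      intro m _
      rw [show (X : Polynomial ℚ) * (C (t (K+1) (m+1)) * Q (m+1)) = C (t (K+1) (m+1)) * (X * Q (m+1)) by ring,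
        XQ, C_mul]
      ring
    rw [Finset.sum_congr rfl h1, Finset.sum_add_distrib]
    have h2 : ∑ m ∈ range (K+1), C (((m:ℚ)+1)^2 * t (K+1) (m+1)) * Q (m+1)
        = ∑ m ∈ range (K+2), C (((m:ℚ)+1)^2 * t (K+1) (m+1)) * Q (m+1) := by
      rw [eq_comm, Finset.sum_range_succ, t_vanish (by omega : K+1 < K+2)]
      norm_num
    rw [h2, Finset.sum_range_succ' (fun m => C (((m:ℚ)+1)^2 * t (K+1) (m+1)) * Q (m+1)) (K+1)]
    have h3 : ∑ m ∈ range (K+2), C (t (K+2) (m+1)) * Q (m+1)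
        = ∑ m ∈ range (K+1), C (t (K+2) (m+2)) * Q (m+2) + C (t (K+2) 1) * Q 1 := by
      rw [Finset.sum_range_succ' (fun m => C (t (K+2) (m+1)) * Q (m+1)) (K+1)]
    rw [h3, ← add_assoc, ← Finset.sum_add_distrib]
    have h4 : ∀ m ∈ range (K+1), C (t (K+1) (m+1)) * Q (m+2)
          + C ((((m+1:ℕ):ℚ)+1)^2 * t (K+1) (m+1+1)) * Q (m+1+1)
        = C (t (K+2) (m+2)) * Q (m+2) := by
      intro m _
      have : t (K+2) (m+2) = (((m+1:ℕ):ℚ)+1)^2 * t (K+1) (m+2) + t (K+1) (m+1) := by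
        have := t_rec (K+1) (m+1)
        push_cast at this ⊢
        linarith [this]
      rw [this, C_add, C_mul]
      push_cast
      ring
    rw [Finset.sum_congr rfl h4]
    congr 1
    rw [t_one, t_one]
    norm_num

lemma evalB (K : ℕ) (x : ℚ) : x^(K+1)
    = ∑ m ∈ range (K+1), t (K+1) (m+1) * ∏ j ∈ range (m+1), (x - (j:ℚ)^2) := by
  have := congrArg (Polynomial.eval x) (polyB K)
  simpa [Q, Polynomial.eval_finset_sum, Polynomial.eval_prod] using this

lemma coeffB (K : ℕ) : ∑ m ∈ range (K+2), t (K+2) (m+1) * ∏ j ∈ range m, (-(((j:ℚ)+1)^2)) = 0 := by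
  have h := congrArg (fun p => Polynomial.coeff p 1) (polyB (K+1))
  rw [Polynomial.coeff_X_pow, if_neg (show ¬(1 = K+1+1) by omega)] at h
  have hc : ∀ m : ℕ, (Polynomial.C (t (K+2) (m+1)) * Q (m+1)).coeff 1
      = t (K+2) (m+1) * ∏ j ∈ range m, (-(((j:ℚ)+1)^2)) := by
    intro m
    rw [Polynomial.coeff_C_mul]
    congr 1
    have hQ : Q (m+1) = (∏ j ∈ range m, (X - Polynomial.C (((j+1:ℕ):ℚ)^2))) * X := by
      rw [Q, Finset.prod_range_succ' (fun j => (X : Polynomial ℚ) - Polynomial.C ((j:ℚ)^2)) m]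
      simp
    rw [hQ, Polynomial.coeff_mul_X, Polynomial.coeff_zero_eq_eval_zero, Polynomial.eval_prod]
    apply Finset.prod_congr rfl
    intro j _
    simp only [Polynomial.eval_sub, Polynomial.eval_X, Polynomial.eval_C]
    push_cast
    ring
  rw [Polynomial.finset_sum_coeff, Finset.sum_congr rfl (fun m _ => hc m)] at h
  exact h.symm

lemma prodsplit (M : ℚ) (mm : ℕ) :
    ∏ j ∈ range (mm+1), (M*(M+1) - (j:ℚ)*((j:ℚ)+1))
      = (M - mm)*(M+1) * ∏ j ∈ range mm, ((M - (j:ℚ)) * (M + (j:ℚ) + 2)) := by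
  have hfac : ∀ j ∈ range (mm+1), (M*(M+1) - (j:ℚ)*((j:ℚ)+1)) = (M - (j:ℚ)) * (M + (j:ℚ) + 1) :=
    fun j _ => by ring
  calc ∏ j ∈ range (mm+1), (M*(M+1) - (j:ℚ)*((j:ℚ)+1))
      = (∏ j ∈ range (mm+1), (M - (j:ℚ))) * ∏ j ∈ range (mm+1), (M + (j:ℚ) + 1) := by
        rw [Finset.prod_congr rfl hfac, Finset.prod_mul_distrib]
    _ = (M - mm)*(M+1) * ((∏ j ∈ range mm, (M - (j:ℚ))) * ∏ j ∈ range mm, (M + ((j+1:ℕ):ℚ) + 1)) := by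
        rw [Finset.prod_range_succ (fun j => M - (j:ℚ)) mm,
          Finset.prod_range_succ' (fun j => M + (j:ℚ) + 1) mm]
        push_cast
        ring
    _ = (M - mm)*(M+1) * ∏ j ∈ range mm, ((M - (j:ℚ)) * (M + (j:ℚ) + 2)) := by
        rw [← Finset.prod_mul_distrib]
        congr 1
        apply Finset.prod_congr rfl
        intro j _
        push_cast
        ring

lemma prodsplit2 (M : ℚ) (mm : ℕ) :
    ∏ j ∈ range (mm+1), (M*(M+1) - (j:ℚ)*((j:ℚ)+1))
      = M*(M + mm + 1) * ∏ j ∈ range mm, ((M - (j:ℚ) - 1) * (M + (j:ℚ) + 1)) := by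
  have hfac : ∀ j ∈ range (mm+1), (M*(M+1) - (j:ℚ)*((j:ℚ)+1)) = (M - (j:ℚ)) * (M + (j:ℚ) + 1) :=
    fun j _ => by ring
  calc ∏ j ∈ range (mm+1), (M*(M+1) - (j:ℚ)*((j:ℚ)+1))
      = (∏ j ∈ range (mm+1), (M - (j:ℚ))) * ∏ j ∈ range (mm+1), (M + (j:ℚ) + 1) := by
        rw [Finset.prod_congr rfl hfac, Finset.prod_mul_distrib]
    _ = M*(M + mm + 1) * ((∏ j ∈ range mm, (M - ((j+1:ℕ):ℚ))) * ∏ j ∈ range mm, (M + (j:ℚ) + 1)) := by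
        rw [Finset.prod_range_succ' (fun j => M - (j:ℚ)) mm,
          Finset.prod_range_succ (fun j => M + (j:ℚ) + 1) mm]
        push_cast
        ring
    _ = M*(M + mm + 1) * ∏ j ∈ range mm, ((M - (j:ℚ) - 1) * (M + (j:ℚ) + 1)) := by
        rw [← Finset.prod_mul_distrib]
        congr 1
        apply Finset.prod_congr rfl
        intro j _
        push_cast
        ring

lemma telesA (m : ℕ) : ∀ n : ℕ,
    (2*(m:ℚ)+2) * ∑ i ∈ Icc 1 n, (i:ℚ) * ∏ j ∈ range m, ((i:ℚ)^2 - ((j:ℚ)+1)^2)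
    = ∏ j ∈ range (m+1), ((n:ℚ)*((n:ℚ)+1) - (j:ℚ)*((j:ℚ)+1)) := by
  intro n
  induction n with
  | zero =>
    have h1 : (Icc 1 0 : Finset ℕ) = ∅ := rfl
    rw [h1, Finset.sum_empty, mul_zero]
    symm
    apply Finset.prod_eq_zero (Finset.mem_range.mpr (show 0 < m+1 by omega))
    norm_num
  | succ n ih =>
    rw [Finset.sum_Icc_succ_top (by omega : 1 ≤ n+1), mul_add, ih]
    have g1 : ∏ j ∈ range (m+1), ((↑(n+1):ℚ)*((↑(n+1):ℚ)+1) - (j:ℚ)*((j:ℚ)+1))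
        = ((n:ℚ)+1)*((n:ℚ)+1+m+1) * ∏ j ∈ range m, (((n:ℚ) - (j:ℚ)) * ((n:ℚ) + (j:ℚ) + 2)) := by
      rw [show ((↑(n+1):ℚ)) = (n:ℚ)+1 by push_cast; ring, prodsplit2 ((n:ℚ)+1) m]
      congr 1
      apply Finset.prod_congr rfl
      intro j _
      ring
    have g2 : ∏ j ∈ range (m+1), ((n:ℚ)*((n:ℚ)+1) - (j:ℚ)*((j:ℚ)+1))
        = ((n:ℚ) - m)*((n:ℚ)+1) * ∏ j ∈ range m, (((n:ℚ) - (j:ℚ)) * ((n:ℚ) + (j:ℚ) + 2)) :=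
      prodsplit ((n:ℚ)) m
    have g3 : (↑(n+1):ℚ) * ∏ j ∈ range m, ((↑(n+1):ℚ)^2 - ((j:ℚ)+1)^2)
        = ((n:ℚ)+1) * ∏ j ∈ range m, (((n:ℚ) - (j:ℚ)) * ((n:ℚ) + (j:ℚ) + 2)) := by
      congr 1
      · push_cast; ring
      apply Finset.prod_congr rfl
      intro j _
      push_cast
      ring
    rw [g1, g2, g3]
    ring

noncomputable def PsP (m : ℕ) : Polynomial ℤ :=
  ∏ j ∈ Finset.range m, (Polynomial.X - Polynomial.C ((j * (j + 1) : ℕ) : ℤ))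

lemma Ps_def (m r : ℕ) : Ps m r = (PsP m).coeff r := rfl

lemma PsP_natDegree (m : ℕ) : (PsP m).natDegree ≤ m := by
  refine le_trans (Polynomial.natDegree_prod_le _ _) ?_
  apply le_trans (Finset.sum_le_sum (fun j _ => le_of_eq (Polynomial.natDegree_X_sub_C _)))
  simp

lemma Ps_high {m r : ℕ} (h : m < r) : Ps m r = 0 :=
  Polynomial.coeff_eq_zero_of_natDegree_lt (lt_of_le_of_lt (PsP_natDegree m) h)

lemma Ps_eval (m : ℕ) (u : ℚ) :
    ∏ j ∈ range m, (u - (j:ℚ)*((j:ℚ)+1)) = ∑ r ∈ range (m+1), (Ps m r : ℚ) * u^r := by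
  have hmap : (PsP m).map (Int.castRingHom ℚ)
      = ∏ j ∈ range m, ((X : Polynomial ℚ) - Polynomial.C ((j:ℚ)*((j:ℚ)+1))) := by
    rw [PsP, Polynomial.map_prod]
    apply Finset.prod_congr rfl
    intro j _
    rw [Polynomial.map_sub, Polynomial.map_X, Polynomial.map_C]
    congr 1
    rw [show ((Int.castRingHom ℚ) ((j*(j+1) : ℕ) : ℤ)) = (((j*(j+1) : ℕ) : ℤ) : ℚ) from rfl]
    push_cast
    ring
  have hdeg : ((PsP m).map (Int.castRingHom ℚ)).natDegree < m + 1 :=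
    lt_of_le_of_lt (le_trans Polynomial.natDegree_map_le (PsP_natDegree m)) (by omega)
  have hev : Polynomial.eval u ((PsP m).map (Int.castRingHom ℚ)) = ∏ j ∈ range m, (u - (j:ℚ)*((j:ℚ)+1)) := by
    rw [hmap, Polynomial.eval_prod]
    apply Finset.prod_congr rfl
    intro j _
    simp
  rw [← hev, Polynomial.eval_eq_sum_range' hdeg u]
  apply Finset.sum_congr rfl
  intro r _
  rw [Polynomial.coeff_map, Ps_def]
  simp

lemma Ps_zero (m : ℕ) : Ps (m+1) 0 = 0 := by
  rw [Ps_def, Polynomial.coeff_zero_eq_eval_zero, PsP, Polynomial.eval_prod]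
  apply Finset.prod_eq_zero (Finset.mem_range.mpr (show 0 < m+1 by omega))
  simp

lemma prod_shift (m : ℕ) : ∏ j ∈ range m, (-(((j:ℚ)+1)*((j:ℚ)+2)))
    = ((m:ℚ)+1) * ∏ j ∈ range m, (-(((j:ℚ)+1)^2)) := by
  induction m with
  | zero => simp
  | succ m ih =>
    rw [Finset.prod_range_succ, ih, Finset.prod_range_succ]
    push_cast
    ring

lemma Ps_one (m : ℕ) : (Ps (m+1) 1 : ℚ) = ((m:ℚ)+1) * ∏ j ∈ range m, (-(((j:ℚ)+1)^2)) := by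
  rw [← prod_shift]
  have h1 : PsP (m+1) = (∏ j ∈ range m, ((X : Polynomial ℤ) - Polynomial.C (((j+1) * (j+1+1) : ℕ) : ℤ))) * X := by
    rw [PsP, Finset.prod_range_succ' (fun j => (X : Polynomial ℤ) - Polynomial.C ((j * (j + 1) : ℕ) : ℤ)) m]
    simp
  rw [Ps_def, h1, Polynomial.coeff_mul_X, Polynomial.coeff_zero_eq_eval_zero, Polynomial.eval_prod]
  push_cast
  apply Finset.prod_congr rfl
  intro j _
  simp only [Polynomial.eval_sub, Polynomial.eval_X, Polynomial.eval_C]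
  push_cast
  ring

lemma t_def : ∀ K m, t K m = (Rfull K m : ℚ) / (Nat.factorial (2*m)) := fun _ _ => rfl

lemma Sgauss (n : ℕ) : 2 * (S 1 n : ℚ) = (n:ℚ) * ((n:ℚ)+1) := by
  induction n with
  | zero => simp [S]
  | succ n ih =>
    have : S 1 (n+1) = S 1 n + (n+1) := by
      rw [S, S, Finset.sum_Icc_succ_top (by omega : 1 ≤ n+1)]
      ring
    rw [this]
    push_cast
    push_cast at ih
    linarith

theorem stmt_13 (k n : ℕ) (hk : 1 ≤ k) (hn : 1 ≤ n) :
    (S (2 * k + 1) n : ℚ) =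
      (S 1 n : ℚ) ^ 2 * ∑ r ∈ Finset.Icc 1 k, c k r * (S 1 n : ℚ) ^ (r - 1) := by
  obtain ⟨k', rfl⟩ : ∃ k', k = k' + 1 := ⟨k - 1, by omega⟩
  set k := k' + 1
  set T : ℚ := (S 1 n : ℚ) with hT
  set u : ℚ := (n:ℚ) * ((n:ℚ)+1) with hu
  have huT : u = 2 * T := (Sgauss n).symm
  -- Step 1: pointwise identity
  have step1 : ∀ i ∈ Icc 1 n, (i:ℚ)^(2*k+1)
      = ∑ m ∈ range (k+1), t (k+1) (m+1) * ((i:ℚ) * ∏ j ∈ range m, ((i:ℚ)^2 - ((j:ℚ)+1)^2)) := by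
    intro i hi
    have hi1 : 1 ≤ i := (Finset.mem_Icc.mp hi).1
    have hine : (i:ℚ) ≠ 0 := by positivity
    have h := evalB k ((i:ℚ)^2)
    have hL : ((i:ℚ)^2)^(k+1) = (i:ℚ) * (i:ℚ)^(2*k+1) := by ring
    have hR : ∀ m ∈ range (k+1), t (k+1) (m+1) * ∏ j ∈ range (m+1), ((i:ℚ)^2 - (j:ℚ)^2)
        = (i:ℚ) * (t (k+1) (m+1) * ((i:ℚ) * ∏ j ∈ range m, ((i:ℚ)^2 - ((j:ℚ)+1)^2))) := by
      intro m _
      rw [Finset.prod_range_succ' (fun j => (i:ℚ)^2 - (j:ℚ)^2) m]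
      have : ∀ j ∈ range m, ((i:ℚ)^2 - ((j+1:ℕ):ℚ)^2) = ((i:ℚ)^2 - ((j:ℚ)+1)^2) := by
        intro j _; push_cast; ring
      rw [Finset.prod_congr rfl this]
      push_cast
      ring
    rw [hL, Finset.sum_congr rfl hR, ← Finset.mul_sum] at h
    exact mul_left_cancel₀ hine h
  -- Step 2: sum over i and swap
  have step2 : (S (2*k+1) n : ℚ)
      = ∑ m ∈ range (k+1), t (k+1) (m+1) * ∑ i ∈ Icc 1 n, (i:ℚ) * ∏ j ∈ range m, ((i:ℚ)^2 - ((j:ℚ)+1)^2) := by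
    have : (S (2*k+1) n : ℚ) = ∑ i ∈ Icc 1 n, (i:ℚ)^(2*k+1) := by
      rw [S]; push_cast; rfl
    rw [this, Finset.sum_congr rfl step1, Finset.sum_comm]
    apply Finset.sum_congr rfl
    intro m _
    rw [Finset.mul_sum]
  -- Step 3: telescoping and Ps expansion
  have step3 : ∀ m ∈ range (k+1), t (k+1) (m+1) * ∑ i ∈ Icc 1 n, (i:ℚ) * ∏ j ∈ range m, ((i:ℚ)^2 - ((j:ℚ)+1)^2)
      = ∑ r ∈ range (k+2), (t (k+1) (m+1) / (2*(m:ℚ)+2)) * (Ps (m+1) r : ℚ) * u^r := by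
    intro m hm
    have hmk : m < k+1 := mem_range.mp hm
    have h2m : (2*(m:ℚ)+2) ≠ 0 := by positivity
    have hA := telesA m n
    have hsum : ∑ i ∈ Icc 1 n, (i:ℚ) * ∏ j ∈ range m, ((i:ℚ)^2 - ((j:ℚ)+1)^2)
        = (∏ j ∈ range (m+1), (u - (j:ℚ)*((j:ℚ)+1))) / (2*(m:ℚ)+2) := by
      rw [eq_div_iff h2m, mul_comm, hu, ← hA]
    rw [hsum, Ps_eval (m+1) u]
    have hext : ∑ r ∈ range (m+2), (Ps (m+1) r : ℚ) * u^r = ∑ r ∈ range (k+2), (Ps (m+1) r : ℚ) * u^r := by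
      apply Finset.sum_subset
      · intro x hx; simp at hx ⊢; omega
      · intro r _ hr
        simp only [mem_range, not_lt] at hr
        rw [Ps_high (show m+1 < r by omega)]
        norm_num
    rw [hext, div_eq_mul_inv, Finset.sum_mul, Finset.mul_sum]
    apply Finset.sum_congr rfl
    intro r _
    ring
  -- Step 4: assemble as a polynomial in u
  set A : ℕ → ℚ := fun r => ∑ m ∈ range (k+1), (t (k+1) (m+1) / (2*(m:ℚ)+2)) * (Ps (m+1) r : ℚ) with hA
  have step4 : (S (2*k+1) n : ℚ) = ∑ r ∈ range (k+2), A r * u^r := by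
    rw [step2, Finset.sum_congr rfl step3, Finset.sum_comm]
    apply Finset.sum_congr rfl
    intro r _
    rw [hA, Finset.sum_mul]
  have hA0 : A 0 = 0 := by
    rw [hA]
    apply Finset.sum_eq_zero
    intro m _
    rw [Ps_zero]
    norm_num
  have hA1 : A 1 = 0 := by
    have hcoef := coeffB k'
    show ∑ m ∈ range (k+1), t (k+1) (m+1) / (2*(m:ℚ)+2) * (Ps (m+1) 1 : ℚ) = 0
    have : ∀ m ∈ range (k+1), (t (k+1) (m+1) / (2*(m:ℚ)+2)) * (Ps (m+1) 1 : ℚ)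
        = (1/2) * (t (k'+2) (m+1) * ∏ j ∈ range m, (-(((j:ℚ)+1)^2))) := by
      intro m _
      rw [Ps_one]
      have h2m : (2*(m:ℚ)+2) ≠ 0 := by positivity
      field_simp
      ring
    rw [Finset.sum_congr rfl this, ← Finset.mul_sum, hcoef, mul_zero]
  have hc : ∀ r' ∈ Icc 1 k, c k r' = 2^(r'+1) * A (r'+1) := by
    intro r' hr'
    have hr1 : 1 ≤ r' := (Finset.mem_Icc.mp hr').1
    have hrk : r' ≤ k := (Finset.mem_Icc.mp hr').2
    rw [c, hA, Finset.mul_sum]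
    rw [show ∑ m ∈ range (k+1), (2:ℚ)^(r'+1) * ((t (k+1) (m+1) / (2*(m:ℚ)+2)) * (Ps (m+1) (r'+1) : ℚ))
        = ∑ m ∈ Icc r' k, (2:ℚ)^(r'+1) * ((t (k+1) (m+1) / (2*(m:ℚ)+2)) * (Ps (m+1) (r'+1) : ℚ)) from
      (Finset.sum_subset (by intro x hx; simp at hx ⊢; omega) ?_).symm]
    · apply Finset.sum_congr rfl
      intro m hm
      have ht := t_def (k+1) (m+1)
      have hR := Rfull_eq (k+1) (m+1) (by omega)
      rw [ht, hR]
      have hfac : ((2*(m+1)).factorial : ℚ) = ((2*m+2).factorial : ℚ) := by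
        norm_num [show 2*(m+1) = 2*m+2 by ring]
      rw [hfac]
      have h1 : ((2*m+2).factorial : ℚ) ≠ 0 := by positivity
      have h2 : (2*(m:ℚ)+2) ≠ 0 := by positivity
      have h3 : ((m:ℚ)+1) ≠ 0 := by positivity
      field_simp
      push_cast
      ring
    · intro m hm hm2
      simp only [mem_range] at hm
      simp only [Finset.mem_Icc] at hm2
      rw [Ps_high (show m+1 < r'+1 by omega)]
      norm_num
  -- final computation
  rw [step4]
  rw [Finset.sum_range_succ' (fun r => A r * u^r) (k+1),
    Finset.sum_range_succ' (fun r => A (r+1) * u^(r+1)) k]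
  rw [hA0, hA1]
  norm_num
  rw [show (Icc 1 k) = Finset.Ico 1 (k+1) from (Finset.Ico_add_one_right_eq_Icc 1 k).symm,
    Finset.sum_Ico_eq_sum_range, show k+1-1 = k by omega, Finset.mul_sum]
  apply Finset.sum_congr rfl
  intro r hr
  have hrk : r < k := mem_range.mp hr
  rw [hc (1+r) (by simp; omega)]
  rw [show 1+r-1 = r by omega, show 1+r+1 = r+2 by omega, huT]
  ring
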